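/- The Casimir element Ω = Σᵢ ωᵢ ωⁱ of the graded affine Hecke algebra ℍ, defined using dual bases {ωᵢ}, {ωⁱ} of V₀^∨ with respect to a W-invariant inner product, is central in ℍ. -/

import Mathlib

/-- The Casimir element Ω = Σᵢ ωᵢ ωⁱ of the graded affine Hecke
algebra, defined via dual bases of V₀^∨ w.r.t. a W-invariant inner product,
is central in ℍ (the subalgebra generated by the t_w and S(V^∨)). -/
theorem stmt_3
    {V V' : Type} [AddCommGroup V] [Module ℂ V] [DecidableEq V]
    [AddCommGroup V'] [Module ℂ V']
    (P : V →ₗ[ℂ] V' →ₗ[ℂ] ℂ)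
    {W : Type} [Group W]
    (σ : W →* (V ≃ₗ[ℂ] V)) (σ' : W →* (V' ≃ₗ[ℂ] V'))
    (R Rpos Δ : Finset V) (s : V → W) (c : V → ℝ) (cor : V → V')
    {H : Type} [Ring H] [Algebra ℂ H]
    (t : W → H) (x : V' →ₗ[ℂ] H)
    (ht1 : t 1 = 1) (htm : ∀ w₁ w₂ : W, t (w₁ * w₂) = t w₁ * t w₂)
    (hxc : ∀ ω₁ ω₂ : V', x ω₁ * x ω₂ = x ω₂ * x ω₁)
    (hrel : ∀ α ∈ Δ, ∀ ω : V', x ω * t (s α) - t (s α) * x (σ' (s α) ω)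
        = algebraMap ℂ H ((c α : ℂ) * P α ω))
    (hΔR : Δ ⊆ Rpos) (hRposR : Rpos ⊆ R)
    (hRpos : ∀ α ∈ R, (α ∈ Rpos ∧ -α ∉ Rpos) ∨ (α ∉ Rpos ∧ -α ∈ Rpos))
    (hRW : ∀ (w : W), ∀ α ∈ R, σ w α ∈ R)
    (hs2 : ∀ α ∈ R, s α * s α = 1)
    (hconj : ∀ (w : W), ∀ α ∈ R, s (σ w α) = w * s α * w⁻¹)
    (hsneg : ∀ α ∈ R, s (-α) = s α)
    (hcW : ∀ (w : W) (α : V), c (σ w α) = c α)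
    (hcneg : ∀ α ∈ R, c (-α) = c α)
    (hPW : ∀ (w : W) (v : V) (v' : V'), P (σ w v) (σ' w v') = P v v')
    (hsV : ∀ α ∈ R, ∀ v : V, σ (s α) v = v - P v (cor α) • α)
    (hsV' : ∀ α ∈ R, ∀ ω : V', σ' (s α) ω = ω - P α ω • cor α)
    (hgen : ∀ w : W, ∃ L : List V, (∀ α ∈ L, α ∈ Δ) ∧ w = (L.map s).prod)
    {n : ℕ} (B : V' →ₗ[ℂ] V' →ₗ[ℂ] ℂ)
    (hBsym : ∀ u v : V', B u v = B v u)
    (hBW : ∀ (w : W) (u v : V'), B (σ' w u) (σ' w v) = B u v)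
    (b b' : Module.Basis (Fin n) ℂ V')
    (hdual : ∀ i j, B (b i) (b' j) = if i = j then 1 else 0) :
    ∀ a ∈ Algebra.adjoin ℂ (Set.range t ∪ Set.range x),
      a * (∑ i, x (b i) * x (b' i)) = (∑ i, x (b i) * x (b' i)) * a := by
  classical
  -- dual basis facts
  have hrepr_b : ∀ (v : V') (j : Fin n), B v (b' j) = b.repr v j := by
    intro v j
    conv_lhs => rw [← b.sum_repr v]
    simp [hdual, Finset.sum_ite_eq', -Module.Basis.sum_repr]
  have hrepr_b' : ∀ (v : V') (j : Fin n), B (b j) v = b'.repr v j := by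
    intro v j
    conv_lhs => rw [← b'.sum_repr v]
    simp [hdual, Finset.sum_ite_eq, -Module.Basis.sum_repr]
  have hext : ∀ u w : V', (∀ v : V', B u v = B w v) → u = w := by
    intro u w h
    refine b.repr.injective (Finsupp.ext fun j => ?_)
    rw [← hrepr_b u j, ← hrepr_b w j, h]
  have hcomm_root : ∀ α ∈ Δ, (∑ i, x (b i) * x (b' i)) * t (s α)
      = t (s α) * (∑ i, x (b i) * x (b' i)) := by
    intro α hαΔ
    have hαR : α ∈ R := hRposR (hΔR hαΔ)
    have hT2 : t (s α) * t (s α) = 1 := by rw [← htm, hs2 α hαR, ht1]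
    have hτ : ∀ ω : V', σ' (s α) ω = ω - P α ω • cor α := hsV' α hαR
    have hxrel : ∀ ω : V', x ω * t (s α)
        = t (s α) * (x ω - P α ω • x (cor α)) + ((c α : ℂ) * P α ω) • (1 : H) := by
      intro ω
      have h := hrel α hαΔ ω
      rw [hτ ω, map_sub, map_smul, sub_eq_iff_eq_add] at h
      rw [h, add_comm]
      congr 1
      rw [Algebra.smul_def, mul_one]
    have hdone : (∀ ω : V', x ω * t (s α) = t (s α) * x ω) →
        (∑ i, x (b i) * x (b' i)) * t (s α) = t (s α) * (∑ i, x (b i) * x (b' i)) := by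
      intro hcom
      rw [Finset.sum_mul, Finset.mul_sum]
      refine Finset.sum_congr rfl fun i _ => ?_
      rw [mul_assoc, hcom (b' i), ← mul_assoc, hcom (b i), mul_assoc]
    by_cases hP0 : ∀ ω : V', P α ω = 0
    · refine hdone fun ω => ?_
      rw [hxrel ω, hP0 ω]
      simp
    · push_neg at hP0
      obtain ⟨ω₀, hω₀⟩ := hP0
      by_cases hcor : cor α = 0
      · -- degenerate case: the scalars are forced to vanish
        have hrel2 : ∀ ω : V', x ω * t (s α) = t (s α) * x ω + ((c α : ℂ) * P α ω) • (1 : H) := by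
          intro ω
          rw [hxrel ω, hcor, map_zero, smul_zero, sub_zero]
        have hκ : ∀ ω : V', ((c α : ℂ) * P α ω) • (1 : H) = 0 := by
          intro ω
          have e0 : t (s α) * (((c α : ℂ) * P α ω) • (1:H))
              = (((c α : ℂ) * P α ω) • (1:H)) * t (s α) := by
            rw [mul_smul_comm, smul_mul_assoc, mul_one, one_mul]
          have e1 : x ω = t (s α) * x ω * t (s α) + (((c α : ℂ) * P α ω) • (1:H)) * t (s α) := by
            have h := congrArg (fun z => z * t (s α)) (hrel2 ω)
            simpa [mul_assoc, hT2, add_mul] using h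
          have e2 : t (s α) * x ω * t (s α) = x ω + (((c α : ℂ) * P α ω) • (1:H)) * t (s α) := by
            have h := congrArg (fun z => t (s α) * z) (hrel2 ω)
            rw [mul_add, ← mul_assoc, ← mul_assoc, hT2, one_mul, e0] at h
            exact h
          have e3 : x ω + ((((c α : ℂ) * P α ω) • (1:H)) * t (s α)
              + (((c α : ℂ) * P α ω) • (1:H)) * t (s α)) = x ω + 0 := by
            rw [add_zero, ← add_assoc, ← e2]
            exact e1.symm
          have e4 := add_left_cancel e3
          have e5 : (((c α : ℂ) * P α ω) • (1:H)) * t (s α) = 0 := by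
            have h2 : (2:ℂ) • ((((c α : ℂ) * P α ω) • (1:H)) * t (s α)) = 0 := by
              rw [two_smul]; exact e4
            calc (((c α : ℂ) * P α ω) • (1:H)) * t (s α)
                = ((2:ℂ)⁻¹ * 2) • ((((c α : ℂ) * P α ω) • (1:H)) * t (s α)) := by norm_num
              _ = (2:ℂ)⁻¹ • ((2:ℂ) • ((((c α : ℂ) * P α ω) • (1:H)) * t (s α))) := by
                  rw [mul_smul]
              _ = 0 := by rw [h2, smul_zero]
          calc ((c α : ℂ) * P α ω) • (1:H)
              = (((c α : ℂ) * P α ω) • (1:H)) * (t (s α) * t (s α)) := by rw [hT2, mul_one]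
            _ = ((((c α : ℂ) * P α ω) • (1:H)) * t (s α)) * t (s α) := by rw [mul_assoc]
            _ = 0 := by rw [e5, zero_mul]
        refine hdone fun ω => ?_
        rw [hrel2 ω, hκ ω, add_zero]
      · -- generic case
        have hσ2 : ∀ ω : V', σ' (s α) (σ' (s α) ω) = ω := by
          intro ω
          have h1 : σ' (s α) * σ' (s α) = 1 := by rw [← map_mul, hs2 α hαR, map_one]
          have h2 : (σ' (s α) * σ' (s α)) ω = (1 : V' ≃ₗ[ℂ] V') ω := by rw [h1]
          simpa using h2
        have ha2 : P α (cor α) = 2 := by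
          have h := hσ2 ω₀
          rw [hτ, hτ, map_sub, map_smul] at h
          rw [sub_sub, sub_eq_self, ← add_smul] at h
          rcases smul_eq_zero.mp h with h1 | h1
          · simp only [smul_eq_mul] at h1
            have h2 : P α ω₀ * (2 - P α (cor α)) = 0 := by linear_combination h1
            rcases mul_eq_zero.mp h2 with h3 | h3
            · exact absurd h3 hω₀
            · exact (sub_eq_zero.mp h3).symm
          · exact absurd h1 hcor
        have hstar : ∀ u v : V', P α u * B (cor α) v + P α v * B (cor α) u
            = P α u * P α v * B (cor α) (cor α) := by
          intro u v
          have h := hBW (s α) u v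
          rw [hτ, hτ] at h
          simp only [map_sub, map_smul, LinearMap.sub_apply, LinearMap.smul_apply,
            smul_eq_mul] at h
          have hs1 := hBsym u (cor α)
          linear_combination -h - P α v * hs1
        have hF1 : ∀ v : V', B (∑ i, P α (b i) • b' i) v = P α v := by
          intro v
          conv_rhs => rw [← b.sum_repr v]
          rw [map_sum, map_sum]
          simp only [map_smul, LinearMap.sum_apply, LinearMap.smul_apply, smul_eq_mul]
          refine Finset.sum_congr rfl fun i _ => ?_
          rw [hBsym, hrepr_b v i, mul_comm]
        have hF2 : (∑ i, P α (b' i) • b i) = ∑ i, P α (b i) • b' i := by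
          refine hext _ _ fun v => ?_
          rw [hF1, map_sum]
          simp only [map_smul, LinearMap.sum_apply, LinearMap.smul_apply, smul_eq_mul]
          conv_rhs => rw [← b'.sum_repr v]
          rw [map_sum]
          simp only [map_smul, smul_eq_mul]
          refine Finset.sum_congr rfl fun i _ => ?_
          rw [hrepr_b' v i, mul_comm]
        have hm2 : P α (∑ i, P α (b i) • b' i) = ∑ i, P α (b i) * P α (b' i) := by
          rw [map_sum]
          simp only [map_smul, smul_eq_mul]
        have hBcm : B (cor α) (∑ i, P α (b i) • b' i) = 2 := by
          rw [← hBsym, hF1, ha2]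
        have hm0 : P α (∑ i, P α (b i) • b' i) ≠ 0 := by
          intro h0
          have h := hstar (∑ i, P α (b i) • b' i) ω₀
          rw [h0, hBcm] at h
          exact hω₀ (by linear_combination h / 2)
        have hmk : P α (∑ i, P α (b i) • b' i) * B (cor α) (cor α) = 4 := by
          have h := hstar (∑ i, P α (b i) • b' i) (∑ i, P α (b i) • b' i)
          rw [hBcm] at h
          have h4 : P α (∑ i, P α (b i) • b' i) *
              (P α (∑ i, P α (b i) • b' i) * B (cor α) (cor α))
              = P α (∑ i, P α (b i) • b' i) * 4 := by linear_combination -h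
          exact mul_left_cancel₀ hm0 h4
        have hkey : (2:ℂ) • (∑ i, P α (b i) • b' i)
            = P α (∑ i, P α (b i) • b' i) • cor α := by
          refine hext _ _ fun v => ?_
          have h := hstar (∑ i, P α (b i) • b' i) v
          rw [hBcm] at h
          rw [map_smul, map_smul]
          simp only [LinearMap.smul_apply, smul_eq_mul]
          rw [hF1]
          linear_combination -h - P α v * hmk
        -- now work in H
        have ha1 : ∑ i, P α (b i) • x (b' i) = x (∑ i, P α (b i) • b' i) := by
          simp only [map_sum, map_smul]
        have ha2' : ∑ i, P α (b' i) • x (b i) = x (∑ i, P α (b i) • b' i) := by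
          rw [← hF2]
          simp only [map_sum, map_smul]
        have hmy : (P α (∑ i, P α (b i) • b' i)) • x (cor α)
            = (2:ℂ) • x (∑ i, P α (b i) • b' i) := by
          rw [← map_smul, ← hkey, map_smul]
        have hstep : ∀ i : Fin n, x (b i) * x (b' i) * t (s α)
            = t (s α) * ((x (b i) - P α (b i) • x (cor α)) * (x (b' i) - P α (b' i) • x (cor α)))
              + (((c α : ℂ) * P α (b i)) • (x (b' i) - P α (b' i) • x (cor α))
                 + ((c α : ℂ) * P α (b' i)) • x (b i)) := by
          intro i
          calc x (b i) * x (b' i) * t (s α) = x (b i) * (x (b' i) * t (s α)) := by rw [mul_assoc]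
            _ = x (b i) * (t (s α) * (x (b' i) - P α (b' i) • x (cor α)))
                + ((c α : ℂ) * P α (b' i)) • x (b i) := by
                  rw [hxrel (b' i), mul_add, mul_smul_comm, mul_one]
            _ = (x (b i) * t (s α)) * (x (b' i) - P α (b' i) • x (cor α))
                + ((c α : ℂ) * P α (b' i)) • x (b i) := by rw [mul_assoc]
            _ = (t (s α) * (x (b i) - P α (b i) • x (cor α)) + ((c α : ℂ) * P α (b i)) • (1:H))
                  * (x (b' i) - P α (b' i) • x (cor α))
                + ((c α : ℂ) * P α (b' i)) • x (b i) := by rw [hxrel (b i)]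
            _ = t (s α) * ((x (b i) - P α (b i) • x (cor α)) * (x (b' i) - P α (b' i) • x (cor α)))
                + (((c α : ℂ) * P α (b i)) • (x (b' i) - P α (b' i) • x (cor α))
                   + ((c α : ℂ) * P α (b' i)) • x (b i)) := by
                  rw [add_mul, smul_mul_assoc, one_mul, mul_assoc, add_assoc]
        have hS : ∑ i, ((x (b i) - P α (b i) • x (cor α)) * (x (b' i) - P α (b' i) • x (cor α)))
            = ∑ i, x (b i) * x (b' i) := by
          have e : ∀ i : Fin n,
              (x (b i) - P α (b i) • x (cor α)) * (x (b' i) - P α (b' i) • x (cor α))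
              = x (b i) * x (b' i) - P α (b' i) • (x (b i) * x (cor α))
                - (P α (b i) • (x (cor α) * x (b' i))
                   - (P α (b i) * P α (b' i)) • (x (cor α) * x (cor α))) := by
            intro i
            simp only [sub_mul, mul_sub, smul_mul_assoc, mul_smul_comm, smul_smul, smul_sub]
            module
          rw [Finset.sum_congr rfl fun i _ => e i]
          rw [Finset.sum_sub_distrib, Finset.sum_sub_distrib, Finset.sum_sub_distrib]
          have eB : ∑ i, P α (b' i) • (x (b i) * x (cor α))
              = x (∑ i, P α (b i) • b' i) * x (cor α) := by
            calc ∑ i, P α (b' i) • (x (b i) * x (cor α))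
                = ∑ i, (P α (b' i) • x (b i)) * x (cor α) := by simp only [smul_mul_assoc]
              _ = (∑ i, P α (b' i) • x (b i)) * x (cor α) := by rw [Finset.sum_mul]
              _ = x (∑ i, P α (b i) • b' i) * x (cor α) := by rw [ha2']
          have eC : ∑ i, P α (b i) • (x (cor α) * x (b' i))
              = x (∑ i, P α (b i) • b' i) * x (cor α) := by
            calc ∑ i, P α (b i) • (x (cor α) * x (b' i))
                = ∑ i, x (cor α) * (P α (b i) • x (b' i)) := by simp only [mul_smul_comm]
              _ = x (cor α) * ∑ i, P α (b i) • x (b' i) := by rw [Finset.mul_sum]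
              _ = x (cor α) * x (∑ i, P α (b i) • b' i) := by rw [ha1]
              _ = x (∑ i, P α (b i) • b' i) * x (cor α) := hxc _ _
          have eD : ∑ i, (P α (b i) * P α (b' i)) • (x (cor α) * x (cor α))
              = (2:ℂ) • (x (∑ i, P α (b i) • b' i) * x (cor α)) := by
            calc ∑ i, (P α (b i) * P α (b' i)) • (x (cor α) * x (cor α))
                = (∑ i, P α (b i) * P α (b' i)) • (x (cor α) * x (cor α)) := by
                  rw [Finset.sum_smul]
              _ = (P α (∑ i, P α (b i) • b' i)) • (x (cor α) * x (cor α)) := by rw [hm2]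
              _ = ((P α (∑ i, P α (b i) • b' i)) • x (cor α)) * x (cor α) := by
                  rw [smul_mul_assoc]
              _ = ((2:ℂ) • x (∑ i, P α (b i) • b' i)) * x (cor α) := by rw [hmy]
              _ = (2:ℂ) • (x (∑ i, P α (b i) • b' i) * x (cor α)) := by rw [smul_mul_assoc]
          rw [eB, eC, eD, two_smul]
          abel
        have hE : ∑ i, (((c α : ℂ) * P α (b i)) • (x (b' i) - P α (b' i) • x (cor α))
            + ((c α : ℂ) * P α (b' i)) • x (b i)) = 0 := by
          have e : ∀ i : Fin n, ((c α : ℂ) * P α (b i)) • (x (b' i) - P α (b' i) • x (cor α))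
              + ((c α : ℂ) * P α (b' i)) • x (b i)
              = (c α : ℂ) • (P α (b i) • x (b' i)
                  - (P α (b i) * P α (b' i)) • x (cor α) + P α (b' i) • x (b i)) := by
            intro i
            simp only [smul_sub, smul_add, smul_smul, mul_assoc]
          rw [Finset.sum_congr rfl fun i _ => e i, ← Finset.smul_sum]
          have e2 : ∑ i, (P α (b i) • x (b' i)
              - (P α (b i) * P α (b' i)) • x (cor α) + P α (b' i) • x (b i)) = 0 := by
            rw [Finset.sum_add_distrib, Finset.sum_sub_distrib, ha1, ha2', ← Finset.sum_smul,
              ← hm2, hmy, two_smul]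
            abel
          rw [e2, smul_zero]
        calc (∑ i, x (b i) * x (b' i)) * t (s α)
            = ∑ i, x (b i) * x (b' i) * t (s α) := by rw [Finset.sum_mul]
          _ = ∑ i, (t (s α) * ((x (b i) - P α (b i) • x (cor α))
                * (x (b' i) - P α (b' i) • x (cor α)))
              + (((c α : ℂ) * P α (b i)) • (x (b' i) - P α (b' i) • x (cor α))
                 + ((c α : ℂ) * P α (b' i)) • x (b i))) :=
            Finset.sum_congr rfl fun i _ => hstep i
          _ = (∑ i, t (s α) * ((x (b i) - P α (b i) • x (cor α))
                * (x (b' i) - P α (b' i) • x (cor α))))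
              + ∑ i, (((c α : ℂ) * P α (b i)) • (x (b' i) - P α (b' i) • x (cor α))
                 + ((c α : ℂ) * P α (b' i)) • x (b i)) := Finset.sum_add_distrib
          _ = t (s α) * (∑ i, ((x (b i) - P α (b i) • x (cor α))
                * (x (b' i) - P α (b' i) • x (cor α)))) + 0 := by
              rw [← Finset.mul_sum, hE]
          _ = t (s α) * (∑ i, x (b i) * x (b' i)) := by rw [hS, add_zero]
  have hxcomm : ∀ ω : V', x ω * (∑ i, x (b i) * x (b' i))
      = (∑ i, x (b i) * x (b' i)) * x ω := by
    intro ω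
    rw [Finset.mul_sum, Finset.sum_mul]
    refine Finset.sum_congr rfl fun i _ => ?_
    rw [← mul_assoc, hxc ω (b i), mul_assoc, hxc ω (b' i), ← mul_assoc]
  have htcomm : ∀ w : W, t w * (∑ i, x (b i) * x (b' i))
      = (∑ i, x (b i) * x (b' i)) * t w := by
    have hlist : ∀ L : List V, (∀ β ∈ L, β ∈ Δ) →
        t ((L.map s).prod) * (∑ i, x (b i) * x (b' i))
        = (∑ i, x (b i) * x (b' i)) * t ((L.map s).prod) := by
      intro L
      induction L with
      | nil => intro _; simp [ht1]
      | cons β L ih =>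
        intro hL
        have hβ : β ∈ Δ := hL β (List.mem_cons_self)
        have hL' : ∀ γ ∈ L, γ ∈ Δ := fun γ hγ => hL γ (List.mem_cons_of_mem β hγ)
        have hprod : t ((List.map s (β :: L)).prod) = t (s β) * t ((L.map s).prod) := by
          rw [List.map_cons, List.prod_cons, htm]
        rw [hprod, mul_assoc, ih hL', ← mul_assoc, ← hcomm_root β hβ, mul_assoc]
    intro w
    obtain ⟨L, hL, rfl⟩ := hgen w
    exact hlist L hL
  intro a ha
  induction ha using Algebra.adjoin_induction with
  | mem z hz =>
    rcases hz with ⟨w, rfl⟩ | ⟨ω, rfl⟩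
    · exact htcomm w
    · exact hxcomm ω
  | algebraMap r => exact Algebra.commutes r _
  | add u v hu hv ihu ihv => rw [add_mul, mul_add, ihu, ihv]
  | mul u v hu hv ihu ihv => rw [mul_assoc, ihv, ← mul_assoc, ihu, mul_assoc]
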